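/- First-order coverage inequality for quantile regression (deterministic core of Theorem 1): Let n ≥ 1, d ≥ 1, τ ∈ (0,1), let φ_1, …, φ_n ∈ ℝ^d and s_1, …, s_n ∈ ℝ, and suppose β ∈ ℝ^d is a global minimizer of the map β ↦ Σ_{i=1}^n ρ_τ(s_i − φ_i^⊤ β). Then for every γ ∈ ℝ^d such that φ_i^⊤ γ ≥ 0 for all i = 1, …, n, one has Σ_{i=1}^n 1{s_i ≤ φ_i^⊤ β} · (φ_i^⊤ γ) ≥ τ · Σ_{i=1}^n (φ_i^⊤ γ). -/

import Mathlib

open Finset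

/-- The pinball (quantile-regression) loss `ρ_τ(u) = u (τ - 1{u < 0})`. -/
noncomputable def pinball (τ u : ℝ) : ℝ :=
  u * (τ - if u < 0 then 1 else 0)

/-- Exact linear expansion of the pinball loss under a small nonnegative shift. -/
lemma pinball_shift (τ u a t : ℝ) (ha : 0 ≤ a) (ht : 0 ≤ t)
    (hsmall : 0 < u → t * a < u) :
    pinball τ (u - t * a) =
      pinball τ u + t * a * ((if u ≤ 0 then 1 else 0) - τ) := by
  have hta : 0 ≤ t * a := mul_nonneg ht ha
  unfold pinball
  by_cases hu : u ≤ 0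
  · simp only [if_pos hu]
    by_cases h1 : u < 0
    · have h2 : u - t * a < 0 := by linarith
      simp only [if_pos h1, if_pos h2]; ring
    · have hu0 : u = 0 := le_antisymm hu (not_lt.mp h1)
      subst hu0
      by_cases h2 : (0:ℝ) - t * a < 0
      · simp only [if_neg h1, if_pos h2]; ring
      · have : t * a = 0 := le_antisymm (by linarith [not_lt.mp h2]) hta
        simp [this]
  · have hu' : 0 < u := not_le.mp hu
    have h2 : ¬ (u - t * a < 0) := by have := hsmall hu'; push_neg; linarith
    have h1 : ¬ (u < 0) := by linarith
    simp only [if_neg hu, if_neg h1, if_neg h2]; ring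

/-- **First-order coverage inequality for quantile regression (deterministic core of Thm 1).**
If `β` globally minimizes the empirical pinball loss, then for every direction `γ` with
`φ_iᵀγ ≥ 0` for all `i`, `Σ_i 1{s_i ≤ φ_iᵀβ} (φ_iᵀγ) ≥ τ Σ_i (φ_iᵀγ)`. -/
theorem pinball_first_order_coverage
    (n d : ℕ) (hn : 1 ≤ n) (hd : 1 ≤ d)
    (τ : ℝ) (hτ : τ ∈ Set.Ioo (0 : ℝ) 1)
    (φ : Fin n → Fin d → ℝ) (s : Fin n → ℝ) (β : Fin d → ℝ)
    (hmin : ∀ b : Fin d → ℝ,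
      ∑ i, pinball τ (s i - ∑ j, φ i j * β j) ≤
        ∑ i, pinball τ (s i - ∑ j, φ i j * b j)) :
    ∀ γ : Fin d → ℝ, (∀ i, 0 ≤ ∑ j, φ i j * γ j) →
      τ * ∑ i, ∑ j, φ i j * γ j ≤
        ∑ i, (if s i ≤ ∑ j, φ i j * β j then ∑ j, φ i j * γ j else 0) := by
  intro γ hγ
  set u : Fin n → ℝ := fun i => s i - ∑ j, φ i j * β j with hu
  set a : Fin n → ℝ := fun i => ∑ j, φ i j * γ j with ha
  -- choose a small positive step t
  have hne : (Finset.univ : Finset (Fin n)).Nonempty := by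
    refine Finset.univ_nonempty_iff.mpr ?_
    exact Fin.pos_iff_nonempty.mp hn
  set T : Fin n → ℝ := fun i => if 0 < u i ∧ 0 < a i then u i / (2 * a i) else 1
    with hT
  set t : ℝ := Finset.univ.inf' hne T with htdef
  have hTpos : ∀ i, 0 < T i := by
    intro i
    simp only [hT]
    split_ifs with h
    · exact div_pos h.1 (by linarith [h.2])
    · norm_num
  have ht : 0 < t := by
    rw [htdef]
    rw [Finset.lt_inf'_iff]
    exact fun i _ => hTpos i
  have htle : ∀ i, t ≤ T i := fun i => Finset.inf'_le _ (Finset.mem_univ i)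
  have hsmall : ∀ i, 0 < u i → t * a i < u i := by
    intro i hui
    rcases lt_or_eq_of_le (hγ i) with hai | hai
    · have h : T i = u i / (2 * a i) := by
        simp only [hT]; rw [if_pos ⟨hui, hai⟩]
      have : t * a i ≤ u i / (2 * a i) * a i :=
        mul_le_mul_of_nonneg_right (h ▸ htle i) (le_of_lt hai)
      have h3 : t * a i ≤ u i / 2 := by
        have h2 : u i / (2 * a i) * a i = u i / 2 := by
          rw [div_mul_eq_mul_div, mul_div_mul_right _ _ (show a i ≠ 0 from hai.ne')]
        linarith [h2 ▸ this]
      exact lt_of_le_of_lt h3 (half_lt_self hui)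
    · have : a i = 0 := hai.symm
      rw [this]; linarith
  -- apply minimality at β + t γ
  have key := hmin (fun j => β j + t * γ j)
  have hres : ∀ i, s i - ∑ j, φ i j * (β j + t * γ j) = u i - t * a i := by
    intro i
    have hsum : ∑ j, φ i j * (t * γ j) = t * ∑ j, φ i j * γ j := by
      rw [Finset.mul_sum]; exact Finset.sum_congr rfl fun j _ => by ring
    simp only [hu, ha, mul_add, Finset.sum_add_distrib, hsum]
    ring
  have expand : ∀ i, pinball τ (u i - t * a i) =
      pinball τ (u i) + t * a i * ((if u i ≤ 0 then 1 else 0) - τ) := by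
    intro i
    exact pinball_shift τ (u i) (a i) t (hγ i) ht.le (hsmall i)
  have key2 : (0:ℝ) ≤ ∑ i, t * a i * ((if u i ≤ 0 then 1 else 0) - τ) := by
    have : ∑ i, pinball τ (u i) ≤
        ∑ i, (pinball τ (u i) + t * a i * ((if u i ≤ 0 then 1 else 0) - τ)) := by
      calc ∑ i, pinball τ (u i) ≤ ∑ i, pinball τ (s i - ∑ j, φ i j * (β j + t * γ j)) :=
            key
        _ = ∑ i, (pinball τ (u i) + t * a i * ((if u i ≤ 0 then 1 else 0) - τ)) := by
            refine Finset.sum_congr rfl fun i _ => ?_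
            rw [hres i, expand i]
    rw [Finset.sum_add_distrib] at this
    linarith
  -- divide by t
  have key3 : (0:ℝ) ≤ ∑ i, a i * ((if u i ≤ 0 then 1 else 0) - τ) := by
    have : ∑ i, t * a i * ((if u i ≤ 0 then 1 else 0) - τ) =
        t * ∑ i, a i * ((if u i ≤ 0 then 1 else 0) - τ) := by
      rw [Finset.mul_sum]; exact Finset.sum_congr rfl fun i _ => by ring
    rw [this] at key2
    exact nonneg_of_mul_nonneg_right key2 ht
  have hcond : ∀ i, (s i ≤ ∑ j, φ i j * β j) ↔ u i ≤ 0 := by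
    intro i; simp only [hu]; constructor <;> intro h <;> linarith
  have : ∑ i, a i * ((if u i ≤ 0 then 1 else 0) - τ) =
      (∑ i, (if s i ≤ ∑ j, φ i j * β j then a i else 0)) - τ * ∑ i, a i := by
    rw [Finset.mul_sum, ← Finset.sum_sub_distrib]
    refine Finset.sum_congr rfl fun i _ => ?_
    by_cases h : u i ≤ 0
    · rw [if_pos h, if_pos ((hcond i).mpr h)]; ring
    · rw [if_neg h, if_neg (fun hc => h ((hcond i).mp hc))]; ring
  rw [this] at key3
  linarith
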